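/- Let k ∈ C¹((0,∞)) be locally square-integrable on [0,∞) and regularly varying at t = 0 with index ρ < 1, i.e. k(t) = t^ρ ℓ(1/t) for t > 0 with ℓ : (0,∞) → (0,∞) slowly varying. Assume k' is monotone on some right-neighborhood of 0, and that there exist β ≥ 0, h₀ ∈ (0,1) and C > 0 such that |k(t u)/k(t)| ≤ C u^β for all t ∈ (0, h₀] and u ≥ 1. Let α ∈ (β, 1) and define k̃(t) = ∫_0^∞ (k(t+z) − k(t)) e^{−z} z^{−1−α} dz for t > 0. Then this integral converges absolutely for every t > 0, and lim_{t→0+} k̃(t)/(t^{−α} k(t)) = ∫_0^∞ ((1+u)^ρ − 1) u^{−1−α} du. -/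

import Mathlib

open MeasureTheory Filter Set

/-- A measurable function `ℓ`, positive on `(0,∞)`, is slowly varying at infinity if
`ℓ(λ t)/ℓ(t) → 1` as `t → ∞`, for every `λ > 0`. -/
def SlowlyVarying (ℓ : ℝ → ℝ) : Prop :=
  Measurable ℓ ∧ ∀ lam : ℝ, 0 < lam →
    Filter.Tendsto (fun t => ℓ (lam * t) / ℓ t) Filter.atTop (nhds 1)
set_option maxHeartbeats 1000000 in
theorem stmt2 (k : ℝ → ℝ) (ρ : ℝ) (ℓ : ℝ → ℝ) (β h₀ C α : ℝ)
    (hρ : ρ < 1)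
    (hk_smooth : ContDiffOn ℝ 1 k (Ioi 0))
    (hloc : ∀ T : ℝ, 0 < T → IntegrableOn (fun t => (k t) ^ 2) (Ioc 0 T))
    (hℓpos : ∀ x : ℝ, 0 < x → 0 < ℓ x) (hℓsv : SlowlyVarying ℓ)
    (hreg : ∀ t : ℝ, 0 < t → k t = t ^ ρ * ℓ (1 / t))
    (hmono : ∃ δ > 0, MonotoneOn (deriv k) (Ioc 0 δ) ∨ AntitoneOn (deriv k) (Ioc 0 δ))
    (hβ : 0 ≤ β) (hh₀ : h₀ ∈ Ioo (0 : ℝ) 1) (hC : 0 < C)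
    (hscale : ∀ t ∈ Ioc (0 : ℝ) h₀, ∀ u : ℝ, 1 ≤ u → |k (t * u) / k t| ≤ C * u ^ β)
    (hα : α ∈ Ioo β 1) :
    (∀ t : ℝ, 0 < t →
      IntegrableOn (fun z => (k (t + z) - k t) * Real.exp (-z) * z ^ (-1 - α)) (Ioi 0)) ∧
    Tendsto
      (fun t => (∫ z in Ioi (0 : ℝ), (k (t + z) - k t) * Real.exp (-z) * z ^ (-1 - α)) /
        (t ^ (-α) * k t))
      (nhdsWithin 0 (Ioi 0))
      (nhds (∫ u in Ioi (0 : ℝ), ((1 + u) ^ ρ - 1) * u ^ (-1 - α))) := by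
  obtain ⟨hβα, hα1⟩ := hα
  obtain ⟨h₀pos, h₀lt1⟩ := hh₀
  -- positivity of k
  have kpos : ∀ t : ℝ, 0 < t → 0 < k t := by
    intro t ht
    rw [hreg t ht]
    exact mul_pos (Real.rpow_pos_of_pos ht ρ) (hℓpos _ (by positivity))
  have kcont : ContinuousOn k (Ioi 0) := hk_smooth.continuousOn
  have kderiv_cont : ContinuousOn (deriv k) (Ioi 0) :=
    hk_smooth.continuousOn_deriv_of_isOpen isOpen_Ioi le_rfl
  have khas : ∀ x : ℝ, 0 < x → HasDerivAt k (deriv k x) x := by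
    intro x hx
    exact (((hk_smooth.differentiableOn one_ne_zero) x hx).differentiableAt
      (isOpen_Ioi.mem_nhds hx)).hasDerivAt
  -- FTC
  have ftc : ∀ a b : ℝ, 0 < a → a ≤ b → k b - k a = ∫ s in a..b, deriv k s := by
    intro a b ha hab
    have hsub : uIcc a b ⊆ Ioi 0 := by
      rw [uIcc_of_le hab]
      exact fun x hx => lt_of_lt_of_le ha hx.1
    refine (intervalIntegral.integral_eq_sub_of_hasDerivAt
      (fun x hx => khas x (hsub hx)) ((kderiv_cont.mono hsub).intervalIntegrable)).symm
  have derivInt : ∀ a b : ℝ, 0 < a → a ≤ b → IntervalIntegrable (deriv k) volume a b := by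
    intro a b ha hab
    apply ContinuousOn.intervalIntegrable
    apply kderiv_cont.mono
    rw [uIcc_of_le hab]
    exact fun x hx => lt_of_lt_of_le ha hx.1
  -- scaling bound in usable form
  have hscale' : ∀ t : ℝ, 0 < t → t ≤ h₀ → ∀ u : ℝ, 1 ≤ u → k (t * u) ≤ C * u ^ β * k t := by
    intro t ht hth u hu
    have h1 := hscale t ⟨ht, hth⟩ u hu
    have h2 : k (t * u) / k t ≤ C * u ^ β := le_trans (le_abs_self _) h1
    have h3 := kpos t ht
    calc k (t * u) = (k (t * u) / k t) * k t := by field_simp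
    _ ≤ (C * u ^ β) * k t := by
        exact mul_le_mul_of_nonneg_right h2 h3.le
  -- ratio limit from slow variation
  have ratio_lim : ∀ c : ℝ, 0 < c →
      Tendsto (fun t => k (c * t) / k t) (nhdsWithin 0 (Ioi 0)) (nhds (c ^ ρ)) := by
    intro c hc
    have h1 : Tendsto (fun t : ℝ => ℓ (c⁻¹ * t⁻¹) / ℓ t⁻¹) (nhdsWithin 0 (Ioi 0)) (nhds 1) :=
      (hℓsv.2 c⁻¹ (inv_pos.mpr hc)).comp tendsto_inv_nhdsGT_zero
    have h2 : Tendsto (fun t : ℝ => c ^ ρ * (ℓ (c⁻¹ * t⁻¹) / ℓ t⁻¹)) (nhdsWithin 0 (Ioi 0))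
        (nhds (c ^ ρ)) := by
      simpa using h1.const_mul (c ^ ρ)
    refine h2.congr' ?_
    filter_upwards [self_mem_nhdsWithin] with t ht
    have ht : (0:ℝ) < t := ht
    have hct : 0 < c * t := mul_pos hc ht
    have hl1 : 0 < ℓ t⁻¹ := hℓpos _ (by positivity)
    rw [hreg _ hct, hreg _ ht, Real.mul_rpow hc.le ht.le]
    have htρ : (t:ℝ) ^ ρ ≠ 0 := (Real.rpow_pos_of_pos ht ρ).ne'
    have h3 : ℓ (1/t) ≠ 0 := (hℓpos _ (by positivity)).ne'
    have h4 : (1:ℝ)/(c*t) = c⁻¹ * t⁻¹ := by field_simp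
    rw [h4, one_div]
    field_simp
  -- eventual half-point comparison from slow variation
  obtain ⟨K, hKpos, half_ev⟩ : ∃ K : ℝ, 0 < K ∧
      ∀ᶠ s in nhdsWithin (0:ℝ) (Ioi 0), k (2⁻¹ * s) ≤ K * k s := by
    refine ⟨(2:ℝ)⁻¹ ^ ρ + 1, by positivity, ?_⟩
    have h1 := ratio_lim 2⁻¹ (by norm_num)
    have h2 : ∀ᶠ s in nhdsWithin (0:ℝ) (Ioi 0),
        k (2⁻¹ * s) / k s < (2:ℝ)⁻¹ ^ ρ + 1 := h1.eventually (eventually_lt_nhds (lt_add_one _))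
    filter_upwards [h2, self_mem_nhdsWithin] with s hs hs0
    have hks : 0 < k s := kpos s hs0
    calc k (2⁻¹ * s) = (k (2⁻¹ * s) / k s) * k s := by field_simp
    _ ≤ ((2:ℝ)⁻¹ ^ ρ + 1) * k s := mul_le_mul_of_nonneg_right hs.le hks.le
  obtain ⟨δ₂, hδ₂pos, hδ₂⟩ : ∃ δ₂ > (0:ℝ), ∀ s ∈ Ioc (0:ℝ) δ₂, k (2⁻¹ * s) ≤ K * k s := by
    rcases mem_nhdsGT_iff_exists_Ioc_subset.1 half_ev with ⟨u, hu, hsub⟩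
    exact ⟨u, hu, fun s hs => hsub hs⟩
  obtain ⟨δ, hδpos, hδcase⟩ := hmono
  -- uniform bound on the derivative near 0
  obtain ⟨δ₀, hδ₀pos, hδ₀h₀, M, hMpos, Dbound⟩ :
      ∃ δ₀ : ℝ, 0 < δ₀ ∧ δ₀ ≤ h₀ ∧ ∃ M : ℝ, 0 < M ∧
        ∀ s : ℝ, s ∈ Ioc (0:ℝ) δ₀ → |deriv k s| ≤ M * (k s / s) := by
    refine ⟨min (δ / 2) (min h₀ δ₂), ?_, ?_, C * 2 ^ β + 2 * K + 2, by positivity, ?_⟩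
    · exact lt_min (by linarith) (lt_min h₀pos hδ₂pos)
    · exact le_trans (min_le_right _ _) (min_le_left _ _)
    set δ₀ : ℝ := min (δ / 2) (min h₀ δ₂) with hδ₀
    have hδ₀h₀ : δ₀ ≤ h₀ := le_trans (min_le_right _ _) (min_le_left _ _)
    set M : ℝ := C * 2 ^ β + 2 * K + 2 with hM
    intro s hs
    obtain ⟨hs0, hsδ₀⟩ := hs
    have hsδ : 2 * s ≤ δ := by
      have := le_trans hsδ₀ (min_le_left _ _); linarith
    have hsh₀ : s ≤ h₀ := le_trans hsδ₀ hδ₀h₀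
    have hsδ₂ : s ≤ δ₂ := le_trans hsδ₀ (le_trans (min_le_right _ _) (min_le_right _ _))
    have hks : 0 < k s := kpos s hs0
    have hQ : 0 < k s / s := div_pos hks hs0
    -- upper bound on k(2s)
    have up2 : k (2 * s) ≤ C * 2 ^ β * k s := by
      have := hscale' s hs0 hsh₀ 2 one_le_two
      rwa [mul_comm s 2] at this
    -- lower bound on k(s/2)
    have half : k (2⁻¹ * s) ≤ K * k s := hδ₂ s ⟨hs0, hsδ₂⟩
    have khalfpos : 0 < k (2⁻¹ * s) := kpos _ (by positivity)
    have k2pos : 0 < k (2 * s) := kpos _ (by positivity)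
    -- FTC identities
    have I1 : k (2 * s) - k s = ∫ x in s..(2*s), deriv k x := ftc s (2*s) hs0 (by linarith)
    have I2 : k s - k (2⁻¹ * s) = ∫ x in (2⁻¹*s)..s, deriv k x :=
      ftc (2⁻¹*s) s (by positivity) (by linarith)
    have mem1 : ∀ x ∈ Icc s (2*s), x ∈ Ioc (0:ℝ) δ := by
      intro x hx; exact ⟨lt_of_lt_of_le hs0 hx.1, le_trans hx.2 hsδ⟩
    have mem2 : ∀ x ∈ Icc (2⁻¹*s) s, x ∈ Ioc (0:ℝ) δ := by
      intro x hx
      refine ⟨lt_of_lt_of_le (by positivity) hx.1, le_trans hx.2 (by linarith)⟩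
    have smem : s ∈ Ioc (0:ℝ) δ := ⟨hs0, by linarith⟩
    have int1 := derivInt s (2*s) hs0 (by linarith)
    have int2 := derivInt (2⁻¹*s) s (by positivity) (by linarith)
    have hIc1 : IntervalIntegrable (fun _ : ℝ => deriv k s) volume s (2*s) :=
      intervalIntegrable_const
    have hIc2 : IntervalIntegrable (fun _ : ℝ => deriv k s) volume (2⁻¹*s) s :=
      intervalIntegrable_const
    have hCβks : 0 ≤ C * 2 ^ β * k s := by positivity
    have hKks : 0 ≤ K * k s := mul_nonneg hKpos.le hks.le
    rw [abs_le]
    rcases hδcase with hmon | hant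
    · constructor
      · -- lower bound, monotone case
        have e1 : (∫ x in (2⁻¹*s)..s, deriv k x) ≤ ∫ _x in (2⁻¹*s)..s, deriv k s := by
          apply intervalIntegral.integral_mono_on (by linarith) int2 hIc2
          intro x hx
          exact hmon (mem2 x hx) smem hx.2
        rw [intervalIntegral.integral_const, smul_eq_mul] at e1
        rw [← I2] at e1
        have e2 : -(K * k s) ≤ k s - k (2⁻¹ * s) := by linarith [half, hks]
        have e3 : -(K * k s) ≤ (s - 2⁻¹*s) * deriv k s := le_trans e2 e1
        rw [hM, neg_le, show (C * 2 ^ β + 2 * K + 2) * (k s / s)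
            = ((C * 2 ^ β + 2 * K + 2) * k s)/s by ring, le_div_iff₀ hs0]
        linarith [e3, hCβks, hKks, hks]
      · -- upper bound, monotone case
        have e1 : (∫ _x in s..(2*s), deriv k s) ≤ ∫ x in s..(2*s), deriv k x := by
          apply intervalIntegral.integral_mono_on (by linarith) hIc1 int1
          intro x hx
          exact hmon smem (mem1 x hx) hx.1
        rw [intervalIntegral.integral_const, smul_eq_mul] at e1
        rw [← I1] at e1
        have e2 : k (2*s) - k s ≤ C * 2 ^ β * k s := by linarith [up2, hks]
        have e3 : (2*s - s) * deriv k s ≤ C * 2 ^ β * k s := le_trans e1 e2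
        rw [hM, show (C * 2 ^ β + 2 * K + 2) * (k s / s)
            = ((C * 2 ^ β + 2 * K + 2) * k s)/s by ring, le_div_iff₀ hs0]
        linarith [e3, hCβks, hKks, hks]
    · constructor
      · -- lower bound, antitone case
        have e1 : (∫ x in s..(2*s), deriv k x) ≤ ∫ _x in s..(2*s), deriv k s := by
          apply intervalIntegral.integral_mono_on (by linarith) int1 hIc1
          intro x hx
          exact hant smem (mem1 x hx) hx.1
        rw [intervalIntegral.integral_const, smul_eq_mul] at e1
        rw [← I1] at e1
        have e2 : -(k s) ≤ k (2*s) - k s := by linarith [k2pos]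
        have e3 : -(k s) ≤ (2*s - s) * deriv k s := le_trans e2 e1
        rw [hM, neg_le, show (C * 2 ^ β + 2 * K + 2) * (k s / s)
            = ((C * 2 ^ β + 2 * K + 2) * k s)/s by ring, le_div_iff₀ hs0]
        linarith [e3, hCβks, hKks, hks]
      · -- upper bound, antitone case
        have e1 : (∫ _x in (2⁻¹*s)..s, deriv k s) ≤ ∫ x in (2⁻¹*s)..s, deriv k x := by
          apply intervalIntegral.integral_mono_on (by linarith) hIc2 int2
          intro x hx
          exact hant (mem2 x hx) smem hx.2
        rw [intervalIntegral.integral_const, smul_eq_mul] at e1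
        rw [← I2] at e1
        have e2 : k s - k (2⁻¹ * s) ≤ k s := by linarith [khalfpos]
        have e3 : (s - 2⁻¹*s) * deriv k s ≤ k s := le_trans e1 e2
        rw [hM, show (C * 2 ^ β + 2 * K + 2) * (k s / s)
            = ((C * 2 ^ β + 2 * K + 2) * k s)/s by ring, le_div_iff₀ hs0]
        linarith [e3, hCβks, hKks, hks]
  -- key estimate for small u
  have E2 : ∀ t : ℝ, t ∈ Ioc (0:ℝ) (δ₀/2) → ∀ u : ℝ, u ∈ Ioc (0:ℝ) 1 →
      |k (t*(1+u)) - k t| ≤ M * (C * 2 ^ β) * k t * u := by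
    intro t ht u hu
    obtain ⟨ht0, htδ⟩ := ht
    obtain ⟨hu0, hu1⟩ := hu
    have hth₀ : t ≤ h₀ := le_trans htδ (le_trans (by linarith) hδ₀h₀)
    have hle : t ≤ t*(1+u) := by nlinarith
    have h2t : t*(1+u) ≤ 2*t := by nlinarith
    have hktpos : 0 < k t := kpos t ht0
    have dbd : ∀ x ∈ Set.uIoc t (t*(1+u)), ‖deriv k x‖ ≤ M * (C * 2 ^ β) * k t / t := by
      intro x hx
      rw [uIoc_of_le hle] at hx
      obtain ⟨hx1, hx2⟩ := hx
      have hx0 : 0 < x := lt_trans ht0 hx1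
      have hxδ₀ : x ∈ Ioc (0:ℝ) δ₀ := ⟨hx0, by linarith [le_trans hx2 h2t]⟩
      have hkx : k x ≤ C * 2 ^ β * k t := by
        have h1 : (1:ℝ) ≤ x / t := (one_le_div ht0).2 hx1.le
        have h2 := hscale' t ht0 hth₀ (x/t) h1
        rw [mul_div_cancel₀ _ ht0.ne'] at h2
        have h3 : (x/t) ^ β ≤ (2:ℝ) ^ β := by
          apply Real.rpow_le_rpow (by positivity) ?_ hβ
          rw [div_le_iff₀ ht0]
          linarith [le_trans hx2 h2t]
        calc k x ≤ C * (x/t) ^ β * k t := h2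
        _ ≤ C * 2 ^ β * k t := by
            apply mul_le_mul_of_nonneg_right _ hktpos.le
            exact mul_le_mul_of_nonneg_left h3 hC.le
      have hkxpos : 0 < k x := kpos x hx0
      calc ‖deriv k x‖ = |deriv k x| := rfl
      _ ≤ M * (k x / x) := Dbound x hxδ₀
      _ ≤ M * (k x / t) := by
          apply mul_le_mul_of_nonneg_left _ hMpos.le
          exact div_le_div_of_nonneg_left hkxpos.le ht0 hx1.le
      _ ≤ M * ((C * 2 ^ β * k t) / t) := by gcongr
      _ = M * (C * 2 ^ β) * k t / t := by ring
    have key := intervalIntegral.norm_integral_le_of_norm_le_const dbd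
    rw [← ftc t (t*(1+u)) ht0 hle] at key
    have habs : |t*(1+u) - t| = t * u := by
      rw [abs_of_nonneg (by nlinarith [mul_pos ht0 hu0])]; ring
    rw [habs] at key
    calc |k (t*(1+u)) - k t| ≤ M * (C * 2 ^ β) * k t / t * (t * u) := key
    _ = M * (C * 2 ^ β) * k t * u := by field_simp
  -- change of variables z = t * u
  have Ieq : ∀ t : ℝ, 0 < t →
      (∫ z in Ioi (0:ℝ), (k (t + z) - k t) * Real.exp (-z) * z ^ (-1 - α))
        = t ^ (-α) * ∫ u in Ioi (0:ℝ), (k (t*(1+u)) - k t) * Real.exp (-(t*u)) * u ^ (-1-α) := by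
    intro t ht
    have htne : t ≠ 0 := ht.ne'
    have hcomp := integral_comp_mul_left_Ioi
      (fun z => (k (t + z) - k t) * Real.exp (-z) * z ^ (-1 - α)) 0 ht
    rw [mul_zero] at hcomp
    have h3 : (∫ u in Ioi (0:ℝ), (k (t + t*u) - k t) * Real.exp (-(t*u)) * (t*u) ^ (-1 - α))
        = ∫ u in Ioi (0:ℝ),
          t ^ (-1-α) * ((k (t*(1+u)) - k t) * Real.exp (-(t*u)) * u ^ (-1-α)) := by
      apply setIntegral_congr_fun measurableSet_Ioi
      intro u hu
      have hu0 : (0:ℝ) < u := hu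
      dsimp only
      rw [Real.mul_rpow ht.le hu0.le, show t + t*u = t*(1+u) by ring]
      ring
    rw [h3, MeasureTheory.integral_const_mul, smul_eq_mul] at hcomp
    have ht1 : t ^ (-1-α) = t⁻¹ * t ^ (-α) := by
      rw [show (-1-α) = (-1) + (-α) by ring, Real.rpow_add ht, Real.rpow_neg_one]
    rw [ht1] at hcomp
    field_simp at hcomp
    linarith [hcomp]
  -- representation of the ratio
  have Req : ∀ t : ℝ, 0 < t →
      (∫ z in Ioi (0:ℝ), (k (t + z) - k t) * Real.exp (-z) * z ^ (-1 - α)) / (t ^ (-α) * k t)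
        = ∫ u in Ioi (0:ℝ), (k (t*(1+u)) / k t - 1) * Real.exp (-(t*u)) * u ^ (-1-α) := by
    intro t ht
    have hkt := kpos t ht
    have h1 : ∀ u : ℝ, (k (t*(1+u)) / k t - 1) * Real.exp (-(t*u)) * u ^ (-1-α)
        = (k t)⁻¹ * ((k (t*(1+u)) - k t) * Real.exp (-(t*u)) * u ^ (-1-α)) := by
      intro u; field_simp
    have h2 : (∫ u in Ioi (0:ℝ), (k (t*(1+u)) / k t - 1) * Real.exp (-(t*u)) * u ^ (-1-α))
        = (k t)⁻¹ * ∫ u in Ioi (0:ℝ),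
            (k (t*(1+u)) - k t) * Real.exp (-(t*u)) * u ^ (-1-α) := by
      simp_rw [h1]
      exact MeasureTheory.integral_const_mul _ _
    have hta : t ^ (-α) ≠ 0 := (Real.rpow_pos_of_pos ht _).ne'
    rw [Ieq t ht, h2, mul_div_mul_left _ _ hta, div_eq_mul_inv, mul_comm]
  -- the dominating function
  set g : ℝ → ℝ := fun u =>
    if u ≤ 1 then (M * (C * 2 ^ β)) * u ^ (-α) else C * 2 ^ β * u ^ (β - 1 - α) + u ^ (-1 - α)
    with hg
  have g_int : IntegrableOn g (Ioi (0:ℝ)) := by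
    have h1 : IntegrableOn (fun u : ℝ => (M * (C * 2 ^ β)) * u ^ (-α)) (Ioc (0:ℝ) 1) := by
      have h := intervalIntegral.intervalIntegrable_rpow' (a := (0:ℝ)) (b := 1)
        (r := -α) (by linarith)
      rw [intervalIntegrable_iff_integrableOn_Ioc_of_le zero_le_one] at h
      exact h.const_mul _
    have h2 : IntegrableOn
        (fun u : ℝ => C * 2 ^ β * u ^ (β - 1 - α) + u ^ (-1 - α)) (Ioi (1:ℝ)) := by
      apply Integrable.add
      · exact (integrableOn_Ioi_rpow_of_lt (by linarith) one_pos).const_mul _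
      · exact integrableOn_Ioi_rpow_of_lt (by linarith) one_pos
    have e1 : EqOn g (fun u : ℝ => (M * (C * 2 ^ β)) * u ^ (-α)) (Ioc (0:ℝ) 1) :=
      fun u hu => if_pos hu.2
    have e2 : EqOn g (fun u : ℝ => C * 2 ^ β * u ^ (β - 1 - α) + u ^ (-1 - α)) (Ioi (1:ℝ)) :=
      fun u hu => if_neg (not_le.2 hu)
    have g1 : IntegrableOn g (Ioc (0:ℝ) 1) := (integrableOn_congr_fun e1 measurableSet_Ioc).2 h1
    have g2 : IntegrableOn g (Ioi (1:ℝ)) := (integrableOn_congr_fun e2 measurableSet_Ioi).2 h2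
    have := g1.union g2
    rwa [Ioc_union_Ioi_eq_Ioi zero_le_one] at this
  -- measurability of the family
  have hmeasF : ∀ t : ℝ, 0 < t → AEStronglyMeasurable
      (fun u => (k (t*(1+u)) / k t - 1) * Real.exp (-(t*u)) * u ^ (-1-α))
      (volume.restrict (Ioi (0:ℝ))) := by
    intro t ht
    apply ContinuousOn.aestronglyMeasurable _ measurableSet_Ioi
    have c1 : ContinuousOn (fun u : ℝ => k (t*(1+u))) (Ioi 0) := by
      apply kcont.comp ((continuous_const.mul (continuous_const.add continuous_id)).continuousOn)
      intro u hu
      have hu0 : (0:ℝ) < u := hu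
      have : (0:ℝ) < t * (1 + u) := by nlinarith
      exact this
    have c2 : ContinuousOn (fun u : ℝ => u ^ (-1-α)) (Ioi (0:ℝ)) := by
      apply ContinuousOn.rpow_const continuousOn_id
      intro u hu
      exact Or.inl (ne_of_gt hu)
    have c3 : Continuous (fun u : ℝ => Real.exp (-(t*u))) :=
      Real.continuous_exp.comp ((continuous_const.mul continuous_id).neg)
    exact (((c1.div_const _).sub continuousOn_const).mul c3.continuousOn).mul c2
  -- the uniform bound
  have hbound : ∀ᶠ t in nhdsWithin (0:ℝ) (Ioi 0), ∀ᵐ u ∂(volume.restrict (Ioi (0:ℝ))),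
      ‖(k (t*(1+u)) / k t - 1) * Real.exp (-(t*u)) * u ^ (-1-α)‖ ≤ g u := by
    filter_upwards [Ioc_mem_nhdsGT (half_pos hδ₀pos)] with t ht
    rw [ae_restrict_iff' measurableSet_Ioi]
    refine Eventually.of_forall (fun u hu => ?_)
    obtain ⟨ht0, htδ⟩ := ht
    have hu0 : (0:ℝ) < u := hu
    have hkt := kpos t ht0
    have hexp : Real.exp (-(t*u)) ≤ 1 := by
      rw [← Real.exp_zero]
      apply Real.exp_le_exp.2
      nlinarith
    have hexp0 : 0 < Real.exp (-(t*u)) := Real.exp_pos _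
    have hupow : (0:ℝ) < u ^ (-1-α) := Real.rpow_pos_of_pos hu0 _
    rw [Real.norm_eq_abs, abs_mul, abs_mul, abs_of_pos hexp0, abs_of_pos hupow]
    by_cases hu1 : u ≤ 1
    · rw [hg]; simp only [if_pos hu1]
      have hdiff := E2 t ⟨ht0, htδ⟩ u ⟨hu0, hu1⟩
      have hq : k (t*(1+u)) / k t - 1 = (k (t*(1+u)) - k t) / k t := by field_simp
      rw [hq, abs_div, abs_of_pos hkt]
      have step1 : |k (t*(1+u)) - k t| / k t ≤ M * (C * 2 ^ β) * u := by
        rw [div_le_iff₀ hkt]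
        calc |k (t*(1+u)) - k t| ≤ M * (C * 2 ^ β) * k t * u := hdiff
        _ = M * (C * 2 ^ β) * u * k t := by ring
      calc |k (t*(1+u)) - k t| / k t * Real.exp (-(t*u)) * u ^ (-1-α)
          ≤ (M * (C * 2 ^ β) * u) * 1 * u ^ (-1-α) := by
            apply mul_le_mul_of_nonneg_right _ hupow.le
            apply mul_le_mul step1 hexp hexp0.le
            positivity
      _ = (M * (C * 2 ^ β)) * (u * u ^ (-1-α)) := by ring
      _ = (M * (C * 2 ^ β)) * u ^ (-α) := by
            congr 1
            rw [show (-α : ℝ) = 1 + (-1-α) by ring, Real.rpow_add hu0, Real.rpow_one]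
    · rw [hg]; simp only [if_neg hu1]
      have hu1' : (1:ℝ) < u := not_le.1 hu1
      have hth₀ : t ≤ h₀ := le_trans htδ (by linarith [hδ₀pos, hδ₀h₀])
      have hsc := hscale t ⟨ht0, hth₀⟩ (1+u) (by linarith)
      have h1u : ((1:ℝ)+u) ^ β ≤ 2 ^ β * u ^ β := by
        rw [← Real.mul_rpow (by norm_num) hu0.le]
        exact Real.rpow_le_rpow (by linarith) (by linarith) hβ
      have habs : |k (t*(1+u)) / k t - 1| ≤ C * 2 ^ β * u ^ β + 1 := by
        calc |k (t*(1+u)) / k t - 1| ≤ |k (t*(1+u)) / k t| + 1 := by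
              have h := abs_add_le (k (t*(1+u)) / k t) (-1)
              simpa [sub_eq_add_neg] using h
        _ ≤ C * (1+u) ^ β + 1 := by linarith [hsc]
        _ ≤ C * 2 ^ β * u ^ β + 1 := by
              have := mul_le_mul_of_nonneg_left h1u hC.le
              linarith
      calc |k (t*(1+u)) / k t - 1| * Real.exp (-(t*u)) * u ^ (-1-α)
          ≤ (C * 2 ^ β * u ^ β + 1) * 1 * u ^ (-1-α) := by
            apply mul_le_mul_of_nonneg_right _ hupow.le
            apply mul_le_mul habs hexp hexp0.le
            positivity
      _ = C * 2 ^ β * (u ^ β * u ^ (-1-α)) + u ^ (-1-α) := by ring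
      _ = C * 2 ^ β * u ^ (β - 1 - α) + u ^ (-1 - α) := by
            rw [show (β - 1 - α : ℝ) = β + (-1-α) by ring, Real.rpow_add hu0]
  -- pointwise limit
  have hptlim : ∀ᵐ u ∂(volume.restrict (Ioi (0:ℝ))),
      Tendsto (fun t => (k (t*(1+u)) / k t - 1) * Real.exp (-(t*u)) * u ^ (-1-α))
        (nhdsWithin 0 (Ioi 0)) (nhds (((1+u) ^ ρ - 1) * u ^ (-1-α))) := by
    rw [ae_restrict_iff' measurableSet_Ioi]
    refine Eventually.of_forall (fun u hu => ?_)
    have hu0 : (0:ℝ) < u := hu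
    have hr := ratio_lim (1+u) (by linarith)
    have hr' : Tendsto (fun t => k (t*(1+u)) / k t) (nhdsWithin (0:ℝ) (Ioi 0))
        (nhds ((1+u)^ρ)) := by
      refine hr.congr (fun t => ?_)
      rw [mul_comm]
    have hexp : Tendsto (fun t : ℝ => Real.exp (-(t*u))) (nhdsWithin (0:ℝ) (Ioi 0)) (nhds 1) := by
      have hc : Continuous (fun t : ℝ => Real.exp (-(t*u))) :=
        Real.continuous_exp.comp ((continuous_id.mul continuous_const).neg)
      have h0 := hc.tendsto 0
      simp only [zero_mul, neg_zero, Real.exp_zero] at h0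
      exact h0.mono_left nhdsWithin_le_nhds
    have hfin := ((hr'.sub_const 1).mul hexp).mul_const (u ^ (-1-α))
    simpa only [mul_one] using hfin
  -- dominated convergence
  have hFmeas_ev : ∀ᶠ t in nhdsWithin (0:ℝ) (Ioi 0), AEStronglyMeasurable
      (fun u => (k (t*(1+u)) / k t - 1) * Real.exp (-(t*u)) * u ^ (-1-α))
      (volume.restrict (Ioi (0:ℝ))) := by
    filter_upwards [self_mem_nhdsWithin] with t ht
    exact hmeasF t ht
  have hDCT := MeasureTheory.tendsto_integral_filter_of_dominated_convergence g
    hFmeas_ev hbound g_int hptlim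
  constructor
  · intro t ht
    have hcont : ContinuousOn (fun z => (k (t + z) - k t) * Real.exp (-z) * z ^ (-1 - α))
        (Ioi (0:ℝ)) := by
      have c1 : ContinuousOn (fun z : ℝ => k (t + z)) (Ioi 0) := by
        apply kcont.comp ((continuous_const.add continuous_id).continuousOn)
        intro z hz
        have hz0 : (0:ℝ) < z := hz
        have : (0:ℝ) < t + z := by linarith
        exact this
      have c2 : ContinuousOn (fun z : ℝ => z ^ (-1-α)) (Ioi (0:ℝ)) := by
        apply ContinuousOn.rpow_const continuousOn_id
        intro z hz
        exact Or.inl (ne_of_gt hz)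
      have c3 : Continuous (fun z : ℝ => Real.exp (-z)) :=
        Real.continuous_exp.comp continuous_neg
      exact ((c1.sub continuousOn_const).mul c3.continuousOn).mul c2
    -- near zero
    have hsubI : Icc t (t+1) ⊆ Ioi (0:ℝ) := fun x hx => lt_of_lt_of_le ht hx.1
    obtain ⟨L, hL⟩ := isCompact_Icc.exists_bound_of_continuousOn (kderiv_cont.mono hsubI)
    have hL1 : ∀ x ∈ Icc t (t+1), ‖deriv k x‖ ≤ |L| + 1 := by
      intro x hx
      calc ‖deriv k x‖ ≤ L := hL x hx
      _ ≤ |L| + 1 := by have := le_abs_self L; linarith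
    have hA : IntegrableOn (fun z => (k (t + z) - k t) * Real.exp (-z) * z ^ (-1 - α))
        (Ioc (0:ℝ) 1) := by
      have bint : IntegrableOn (fun z : ℝ => (|L| + 1) * z ^ (-α)) (Ioc (0:ℝ) 1) := by
        have h := intervalIntegral.intervalIntegrable_rpow' (a := (0:ℝ)) (b := 1)
          (r := -α) (by linarith)
        rw [intervalIntegrable_iff_integrableOn_Ioc_of_le zero_le_one] at h
        exact h.const_mul _
      apply Integrable.mono' bint
        ((hcont.mono Ioc_subset_Ioi_self).aestronglyMeasurable measurableSet_Ioc)
      rw [ae_restrict_iff' measurableSet_Ioc]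
      refine Eventually.of_forall (fun z hz => ?_)
      obtain ⟨hz0, hz1⟩ := hz
      have hdiff : |k (t+z) - k t| ≤ (|L| + 1) * z := by
        have dbd : ∀ x ∈ Set.uIoc t (t+z), ‖deriv k x‖ ≤ |L| + 1 := by
          intro x hx
          rw [uIoc_of_le (by linarith)] at hx
          exact hL1 x ⟨hx.1.le, by linarith [hx.2]⟩
        have key := intervalIntegral.norm_integral_le_of_norm_le_const dbd
        rw [← ftc t (t+z) ht (by linarith)] at key
        calc |k (t+z) - k t| ≤ (|L| + 1) * |t + z - t| := key
        _ = (|L| + 1) * z := by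
            rw [show t + z - t = z by ring, abs_of_pos hz0]
      have hexp : Real.exp (-z) ≤ 1 := by
        rw [← Real.exp_zero]
        exact Real.exp_le_exp.2 (by linarith)
      have hzpow : (0:ℝ) < z ^ (-1-α) := Real.rpow_pos_of_pos hz0 _
      rw [Real.norm_eq_abs, abs_mul, abs_mul, abs_of_pos (Real.exp_pos _), abs_of_pos hzpow]
      calc |k (t+z) - k t| * Real.exp (-z) * z ^ (-1-α)
          ≤ ((|L| + 1) * z) * 1 * z ^ (-1-α) := by
            apply mul_le_mul_of_nonneg_right _ hzpow.le
            apply mul_le_mul hdiff hexp (Real.exp_pos _).le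
            positivity
      _ = (|L| + 1) * (z * z ^ (-1-α)) := by ring
      _ = (|L| + 1) * z ^ (-α) := by
            congr 1
            rw [show (-α : ℝ) = 1 + (-1-α) by ring, Real.rpow_add hz0, Real.rpow_one]
    -- away from zero
    have hB : IntegrableOn (fun z => (k (t + z) - k t) * Real.exp (-z) * z ^ (-1 - α))
        (Ioi (1:ℝ)) := by
      have hg' : IntegrableOn (fun z : ℝ => z ^ β * Real.exp (-z)) (Ioi (1:ℝ)) := by
        have h := (Real.GammaIntegral_convergent (show (0:ℝ) < β + 1 by linarith)).mono_set
          (Ioi_subset_Ioi zero_le_one)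
        refine (integrableOn_congr_fun (fun z hz => ?_) measurableSet_Ioi).1 h
        rw [show β + 1 - 1 = β by ring]
        ring
      set D : ℝ := C * k h₀ / h₀ ^ β * (t+1) ^ β + |k t| with hD
      have bint : IntegrableOn (fun z : ℝ => D * (z ^ β * Real.exp (-z))) (Ioi (1:ℝ)) :=
        hg'.const_mul _
      apply Integrable.mono' bint
        ((hcont.mono (Ioi_subset_Ioi zero_le_one)).aestronglyMeasurable measurableSet_Ioi)
      rw [ae_restrict_iff' measurableSet_Ioi]
      refine Eventually.of_forall (fun z hz => ?_)
      have hz1 : (1:ℝ) < z := hz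
      have hz0 : (0:ℝ) < z := by linarith
      have htz : (0:ℝ) < t + z := by linarith
      have hzβ : (1:ℝ) ≤ z ^ β := Real.one_le_rpow hz1.le hβ
      have hktz : k (t+z) ≤ C * k h₀ / h₀ ^ β * (t+1) ^ β * z ^ β := by
        have h1 : (1:ℝ) ≤ (t+z)/h₀ := by
          rw [le_div_iff₀ h₀pos]
          nlinarith
        have h2 := hscale' h₀ h₀pos le_rfl ((t+z)/h₀) h1
        rw [mul_div_cancel₀ _ h₀pos.ne'] at h2
        have h3 : ((t+z)/h₀) ^ β = (t+z) ^ β / h₀ ^ β := Real.div_rpow htz.le h₀pos.le β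
        have hcoef : 0 ≤ C * k h₀ / h₀ ^ β * (t+1) ^ β :=
          mul_nonneg (div_nonneg (mul_nonneg hC.le (kpos h₀ h₀pos).le)
            (Real.rpow_nonneg h₀pos.le _)) (Real.rpow_nonneg (by linarith) _)
        have h4 : (t+z) ^ β ≤ (t+1) ^ β * z ^ β := by
          rw [← Real.mul_rpow (by linarith) hz0.le]
          apply Real.rpow_le_rpow htz.le _ hβ
          nlinarith
        calc k (t+z) ≤ C * ((t+z)/h₀) ^ β * k h₀ := h2
        _ = C * k h₀ / h₀ ^ β * (t+z) ^ β := by rw [h3]; ring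
        _ ≤ C * k h₀ / h₀ ^ β * ((t+1) ^ β * z ^ β) := by
            apply mul_le_mul_of_nonneg_left h4
            exact div_nonneg (mul_nonneg hC.le (kpos h₀ h₀pos).le) (Real.rpow_nonneg h₀pos.le _)
        _ = C * k h₀ / h₀ ^ β * (t+1) ^ β * z ^ β := by ring
      have hdiff : |k (t+z) - k t| ≤ D * z ^ β := by
        rw [hD]
        calc |k (t+z) - k t| ≤ |k (t+z)| + |k t| := abs_sub _ _
        _ = k (t+z) + |k t| := by rw [abs_of_pos (kpos _ htz)]
        _ ≤ C * k h₀ / h₀ ^ β * (t+1) ^ β * z ^ β + |k t| * z ^ β := by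
            have h5 : |k t| ≤ |k t| * z ^ β := le_mul_of_one_le_right (abs_nonneg _) hzβ
            linarith [hktz]
        _ = (C * k h₀ / h₀ ^ β * (t+1) ^ β + |k t|) * z ^ β := by ring
      have hzpow : z ^ (-1-α) ≤ 1 :=
        Real.rpow_le_one_of_one_le_of_nonpos hz1.le (by linarith)
      have hzpow0 : (0:ℝ) < z ^ (-1-α) := Real.rpow_pos_of_pos hz0 _
      have hD0 : 0 ≤ D := by
        rw [hD]
        have hcoef : 0 ≤ C * k h₀ / h₀ ^ β * (t+1) ^ β :=
          mul_nonneg (div_nonneg (mul_nonneg hC.le (kpos h₀ h₀pos).le)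
            (Real.rpow_nonneg h₀pos.le _)) (Real.rpow_nonneg (by linarith) _)
        linarith [abs_nonneg (k t)]
      rw [Real.norm_eq_abs, abs_mul, abs_mul, abs_of_pos (Real.exp_pos _), abs_of_pos hzpow0]
      calc |k (t+z) - k t| * Real.exp (-z) * z ^ (-1-α)
          ≤ (D * z ^ β) * Real.exp (-z) * 1 := by
            apply mul_le_mul _ hzpow hzpow0.le (by positivity)
            exact mul_le_mul_of_nonneg_right hdiff (Real.exp_pos _).le
      _ = D * (z ^ β * Real.exp (-z)) := by ring
    have := hA.union hB
    rwa [Ioc_union_Ioi_eq_Ioi zero_le_one] at this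
  · refine Filter.Tendsto.congr' ?_ hDCT
    filter_upwards [self_mem_nhdsWithin] with t ht
    exact (Req t ht).symm
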